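/- Suppose Hypothesis (H) holds and set c* := (a_2 − 2a_1 + a_1a_2)/(a_1a_2). Then for every n ≥ 2 and for ν-almost every x ∈ 𝕏, (n·a_{n+1} − (n+1)·a_n + (1−c*)·a_n·a_{n+1})·ν(B) = (n·a_{n+1} − (n+1)·a_n + (1−c*)·a_n·a_{n+1})·R_x(B) for every B ∈ 𝒳. -/

import Mathlib

open MeasureTheory ProbabilityTheory ENNReal

/-- A sequence `X` is exchangeable under `P`: every finite prefix has a
permutation-invariant joint distribution. -/
def Exchangeable {Ω 𝕏 : Type*} [MeasurableSpace Ω] [MeasurableSpace 𝕏]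
    (P : Measure Ω) (X : ℕ → Ω → 𝕏) : Prop :=
  ∀ (n : ℕ) (σ : Equiv.Perm (Fin n)),
    P.map (fun ω (i : Fin n) => X (σ i) ω) = P.map (fun ω (i : Fin n) => X i ω)

/-- The predictive distributions of `X` are
`ℙ(X_{n+1} ∈ ·  | X_1,…,X_n) = (1 - a_n) ν + (a_n/n) ∑_{i=1}^n R_{X_i}` a.s.,
expressed in disintegrated form: for every measurable `B ⊆ 𝕏` and every
measurable set `A` of trajectories of the first `n` coordinates. -/
def PredEq {Ω 𝕏 : Type*} [MeasurableSpace Ω] [MeasurableSpace 𝕏]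
    (P : Measure Ω) (X : ℕ → Ω → 𝕏) (ν : Measure 𝕏) (R : Kernel 𝕏 𝕏) (a : ℕ → ℝ) : Prop :=
  ∀ n : ℕ, 1 ≤ n → ∀ B : Set 𝕏, MeasurableSet B → ∀ A : Set (Fin n → 𝕏), MeasurableSet A →
    P {ω | (fun i : Fin n => X i ω) ∈ A ∧ X n ω ∈ B} =
      ∫⁻ x in A, (ENNReal.ofReal (1 - a n) * ν B
          + (ENNReal.ofReal (a n) / (n : ℝ≥0∞)) * ∑ i : Fin n, R (x i) B)
        ∂(P.map (fun ω (i : Fin n) => X i ω))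

/-- Hypothesis (H): `X` is exchangeable with marginal distribution `ν`, `R` is a
probability kernel, and the predictive distributions are as in `PredEq` with
constants `a n ∈ (0,1)`. -/
structure HypH {Ω 𝕏 : Type*} [MeasurableSpace Ω] [MeasurableSpace 𝕏]
    (P : Measure Ω) (X : ℕ → Ω → 𝕏) (ν : Measure 𝕏) (R : Kernel 𝕏 𝕏) (a : ℕ → ℝ) : Prop where
  probP : IsProbabilityMeasure P
  probν : IsProbabilityMeasure ν
  markov : IsMarkovKernel R
  meas : ∀ n, Measurable (X n)
  exch : Exchangeable P X
  marginal : ∀ n, P.map (X n) = ν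
  a_mem : ∀ n, 1 ≤ n → a n ∈ Set.Ioo (0 : ℝ) 1
  pred : PredEq P X ν R a

/-- `X` is a measure-valued Pólya urn sequence with parameters `(θ, ν, R)`. -/
def IsMVPS {Ω 𝕏 : Type*} [MeasurableSpace Ω] [MeasurableSpace 𝕏]
    (P : Measure Ω) (X : ℕ → Ω → 𝕏) (θ : ℝ) (ν : Measure 𝕏) (R : Kernel 𝕏 𝕏) : Prop :=
  0 < θ ∧ P.map (X 0) = ν ∧
  ∀ n : ℕ, 1 ≤ n → ∀ B : Set 𝕏, MeasurableSet B → ∀ A : Set (Fin n → 𝕏), MeasurableSet A →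
    P {ω | (fun i : Fin n => X i ω) ∈ A ∧ X n ω ∈ B} =
      ∫⁻ x in A, ((ENNReal.ofReal θ * ν B + ∑ i : Fin n, R (x i) B)
          / (ENNReal.ofReal θ + (n : ℝ≥0∞)))
        ∂(P.map (fun ω (i : Fin n) => X i ω))



section Aux
variable {Ω 𝕏 : Type*} [MeasurableSpace Ω] [MeasurableSpace 𝕏]
  {P : Measure Ω} {X : ℕ → Ω → 𝕏} {ν : Measure 𝕏} {R : Kernel 𝕏 𝕏} {a : ℕ → ℝ}

theorem ci_inv (hH : HypH P X ν R a) {B : Set 𝕏} (hB : MeasurableSet B) :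
    ∫⁻ x, R x B ∂ν = ν B := by
  haveI := hH.probP; haveI := hH.probν; haveI := hH.markov
  have hRB : Measurable fun x => R x B := Kernel.measurable_coe R hB
  have h := hH.pred 1 le_rfl B hB Set.univ MeasurableSet.univ
  have hset : {ω | (fun i : Fin 1 => X i ω) ∈ Set.univ ∧ X 1 ω ∈ B} = X 1 ⁻¹' B := by
    ext ω; simp
  rw [hset, Measure.restrict_univ] at h
  have hL : P (X 1 ⁻¹' B) = ν B := by
    rw [← hH.marginal 1, Measure.map_apply (hH.meas 1) hB]
  simp only [Fin.sum_univ_one, Nat.cast_one, div_one] at h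
  have hmeasF : Measurable fun (x : Fin 1 → 𝕏) =>
      ENNReal.ofReal (1 - a 1) * ν B + ENNReal.ofReal (a 1) * R (x 0) B := by
    apply Measurable.add measurable_const
    exact (hRB.comp (measurable_pi_apply 0)).const_mul _
  rw [lintegral_map hmeasF (measurable_pi_lambda (fun ω (i : Fin 1) => X i ω) fun i => hH.meas i)] at h
  rw [lintegral_add_left measurable_const, lintegral_const] at h
  have hcomp : Measurable fun ω => R ((fun i : Fin 1 => X (i : ℕ) ω) 0) B :=
    hRB.comp (hH.meas 0)
  rw [lintegral_const_mul _ hcomp] at h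
  have h0 : ∫⁻ ω, R ((fun i : Fin 1 => X (i : ℕ) ω) 0) B ∂P = ∫⁻ x, R x B ∂ν := by
    rw [← hH.marginal 0, lintegral_map hRB (hH.meas 0)]
    rfl
  rw [h0, measure_univ, mul_one] at h
  -- h : ν B = ofReal (1 - a 1) * ν B + ofReal (a 1) * ∫⁻ x, R x B ∂ν   (from hL)
  rw [hL] at h
  have ha1 := hH.a_mem 1 le_rfl
  have hsum : ENNReal.ofReal (1 - a 1) + ENNReal.ofReal (a 1) = 1 := by
    rw [← ENNReal.ofReal_add (by linarith [ha1.2]) (le_of_lt ha1.1)]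
    norm_num
  have hνB : ν B ≠ ∞ := measure_ne_top ν B
  have h2 : ENNReal.ofReal (1 - a 1) * ν B + ENNReal.ofReal (a 1) * ν B = ν B := by
    rw [← add_mul, hsum, one_mul]
  have h3 := h2.trans h
  have hfin : ENNReal.ofReal (1 - a 1) * ν B ≠ ∞ :=
    ENNReal.mul_ne_top ENNReal.ofReal_ne_top hνB
  have := (ENNReal.add_right_inj hfin).mp h3
  exact ((ENNReal.mul_right_inj (by simpa using ha1.1) ENNReal.ofReal_ne_top).mp this.symm)

theorem ci_predB (hH : HypH P X ν R a) {A B : Set 𝕏} (hA : MeasurableSet A)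
    (hB : MeasurableSet B) :
    P {ω | X 0 ω ∈ A ∧ X 1 ω ∈ B} =
      ∫⁻ x in A, (ENNReal.ofReal (1 - a 1) * ν B + ENNReal.ofReal (a 1) * R x B) ∂ν := by
  haveI := hH.probP; haveI := hH.probν; haveI := hH.markov
  have hRB : Measurable fun x => R x B := Kernel.measurable_coe R hB
  have hAcyl : MeasurableSet ((fun x : Fin 1 → 𝕏 => x 0) ⁻¹' A) :=
    (measurable_pi_apply 0) hA
  have h := hH.pred 1 le_rfl B hB _ hAcyl
  have hset : {ω | (fun i : Fin 1 => X i ω) ∈ (fun x : Fin 1 → 𝕏 => x 0) ⁻¹' A ∧ X 1 ω ∈ B}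
      = {ω | X 0 ω ∈ A ∧ X 1 ω ∈ B} := rfl
  rw [hset] at h
  simp only [Fin.sum_univ_one, Nat.cast_one, div_one] at h
  rw [h]
  have hf : Measurable fun y : 𝕏 => ENNReal.ofReal (1 - a 1) * ν B + ENNReal.ofReal (a 1) * R y B :=
    measurable_const.add (hRB.const_mul _)
  have hmap : (P.map fun ω (i : Fin 1) => X i ω).map (fun x => x 0) = ν := by
    rw [Measure.map_map (measurable_pi_apply 0) (measurable_pi_lambda (fun ω (i : Fin 1) => X i ω) fun i => hH.meas i)]
    exact hH.marginal 0
  calc ∫⁻ x in (fun x : Fin 1 → 𝕏 => x 0) ⁻¹' A,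
        (ENNReal.ofReal (1 - a 1) * ν B + ENNReal.ofReal (a 1) * R (x 0) B)
        ∂(P.map fun ω (i : Fin 1) => X i ω)
      = ∫⁻ y in A, (ENNReal.ofReal (1 - a 1) * ν B + ENNReal.ofReal (a 1) * R y B)
        ∂((P.map fun ω (i : Fin 1) => X i ω).map (fun x => x 0)) := by
        rw [setLIntegral_map hA hf (measurable_pi_apply 0)]
    _ = _ := by rw [hmap]

theorem ci_pair (hH : HypH P X ν R a) {i : ℕ} (hi : 1 ≤ i) :
    P.map (fun ω => (X 0 ω, X i ω)) = P.map (fun ω => (X 0 ω, X 1 ω)) := by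
  have h10 : ((1 : Fin (i + 1)) : ℕ) = 1 := by
    have : NeZero (i + 1) := ⟨by omega⟩
    rw [Fin.val_one', Nat.mod_eq_of_lt (by omega)]
  have hne1 : (⟨i, by omega⟩ : Fin (i + 1)) ≠ 0 := by
    apply Fin.ne_of_val_ne
    simp only [Fin.val_zero, Fin.val_mk]
    omega
  have hne0 : (0 : Fin (i + 1)) ≠ 1 := by
    apply Fin.ne_of_val_ne
    simp only [Fin.val_zero, h10]
    omega
  set σ : Equiv.Perm (Fin (i + 1)) := Equiv.swap 1 ⟨i, by omega⟩ with hσ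
  have h := hH.exch (i + 1) σ
  have hφ : Measurable fun x : Fin (i + 1) → 𝕏 => (x 0, x 1) :=
    (measurable_pi_apply 0).prodMk (measurable_pi_apply 1)
  have h2 := congrArg (Measure.map (fun x : Fin (i + 1) → 𝕏 => (x 0, x 1))) h
  rw [Measure.map_map hφ (measurable_pi_lambda (fun ω (j : Fin (i+1)) => X (σ j) ω) fun j => hH.meas (σ j)),
    Measure.map_map hφ (measurable_pi_lambda (fun ω (j : Fin (i+1)) => X j ω) fun j => hH.meas j)] at h2
  have hσ0 : σ 0 = 0 := Equiv.swap_apply_of_ne_of_ne hne0 (by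
    intro hcon
    exact hne1 hcon.symm)
  have hσ1 : σ 1 = ⟨i, by omega⟩ := Equiv.swap_apply_left _ _
  have hL : ((fun x : Fin (i + 1) → 𝕏 => (x 0, x 1)) ∘ fun ω (j : Fin (i + 1)) => X (σ j) ω)
      = fun ω => (X 0 ω, X i ω) := by
    funext ω
    simp only [Function.comp_apply, hσ0, hσ1, Fin.val_zero]
  have hR : ((fun x : Fin (i + 1) → 𝕏 => (x 0, x 1)) ∘ fun ω (j : Fin (i + 1)) => X j ω)
      = fun ω => (X 0 ω, X 1 ω) := by
    funext ω
    simp only [Function.comp_apply, h10, Fin.val_zero]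
  rwa [hL, hR] at h2

/-- `E[1_A(X_0) R_{X_i}(B)] = ∫_A ((1-a_1) ν(B) + a_1 ∫ R_y(B) R_x(dy)) ν(dx)` for `i ≥ 1`. -/
theorem ci_mixed (hH : HypH P X ν R a) {i : ℕ} (hi : 1 ≤ i) {A B : Set 𝕏}
    (hA : MeasurableSet A) (hB : MeasurableSet B) :
    ∫⁻ ω, A.indicator (fun _ => (1 : ℝ≥0∞)) (X 0 ω) * R (X i ω) B ∂P =
      ∫⁻ x in A, (ENNReal.ofReal (1 - a 1) * ν B
        + ENNReal.ofReal (a 1) * ∫⁻ y, R y B ∂(R x)) ∂ν := by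
  haveI := hH.probP; haveI := hH.probν; haveI := hH.markov
  have hRB : Measurable fun x => R x B := Kernel.measurable_coe R hB
  have hind : Measurable (A.indicator (fun _ => (1 : ℝ≥0∞))) :=
    measurable_const.indicator hA
  have hf : Measurable fun p : 𝕏 × 𝕏 => A.indicator (fun _ => (1 : ℝ≥0∞)) p.1 * R p.2 B :=
    (hind.comp measurable_fst).mul (hRB.comp measurable_snd)
  -- step 1: replace i by 1 using the pair law
  have hpair_i : Measurable fun ω => (X 0 ω, X i ω) := (hH.meas 0).prodMk (hH.meas i)
  have hpair_1 : Measurable fun ω => (X 0 ω, X 1 ω) := (hH.meas 0).prodMk (hH.meas 1)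
  have step1 : ∫⁻ ω, A.indicator (fun _ => (1 : ℝ≥0∞)) (X 0 ω) * R (X i ω) B ∂P
      = ∫⁻ ω, A.indicator (fun _ => (1 : ℝ≥0∞)) (X 0 ω) * R (X 1 ω) B ∂P := by
    rw [← lintegral_map hf hpair_i, ← lintegral_map hf hpair_1, ci_pair hH hi]
  rw [step1]
  -- step 2: rewrite as integral over the conditioned-and-mapped measure
  have hres : ∫⁻ ω, A.indicator (fun _ => (1 : ℝ≥0∞)) (X 0 ω) * R (X 1 ω) B ∂P
      = ∫⁻ y, R y B ∂((P.restrict ((X 0) ⁻¹' A)).map (X 1)) := by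
    rw [lintegral_map hRB (hH.meas 1), ← lintegral_indicator ((hH.meas 0) hA)]
    congr 1
    funext ω
    by_cases hω : X 0 ω ∈ A <;>
      simp [Set.indicator_of_mem, Set.indicator_of_notMem, hω]
  rw [hres]
  -- step 3: identify the conditioned law
  have hlaw : (P.restrict ((X 0) ⁻¹' A)).map (X 1)
      = (ENNReal.ofReal (1 - a 1) * ν A) • ν
        + ENNReal.ofReal (a 1) • ((ν.restrict A).bind ⇑R) := by
    ext C hC
    rw [Measure.map_apply (hH.meas 1) hC, Measure.restrict_apply ((hH.meas 1) hC)]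
    have hset : X 1 ⁻¹' C ∩ X 0 ⁻¹' A = {ω | X 0 ω ∈ A ∧ X 1 ω ∈ C} := by
      ext ω; exact and_comm
    rw [hset, ci_predB hH hA hC]
    have hRC : Measurable fun x => R x C := Kernel.measurable_coe R hC
    rw [lintegral_add_left measurable_const, setLIntegral_const, lintegral_const_mul _ hRC]
    rw [Measure.coe_add, Pi.add_apply, Measure.smul_apply, Measure.smul_apply,
      Measure.bind_apply hC R.measurable.aemeasurable, smul_eq_mul, smul_eq_mul]
    ring
  rw [hlaw]
  have hq : Measurable fun x => ∫⁻ y, R y B ∂(R x) := hRB.lintegral_kernel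
  rw [lintegral_add_measure, lintegral_smul_measure, lintegral_smul_measure,
    Measure.lintegral_bind R.measurable.aemeasurable hRB.aemeasurable, ci_inv hH hB]
  rw [lintegral_add_right _ (hq.const_mul _), setLIntegral_const,
    lintegral_const_mul _ hq]
  ring

theorem ci_event (hH : HypH P X ν R a) {i : ℕ} (hi : 1 ≤ i) {A B : Set 𝕏}
    (hA : MeasurableSet A) (hB : MeasurableSet B) :
    P {ω | X 0 ω ∈ A ∧ X i ω ∈ B} = P {ω | X 0 ω ∈ A ∧ X 1 ω ∈ B} := by
  have h := congrArg (fun μ : Measure (𝕏 × 𝕏) => μ (A ×ˢ B)) (ci_pair hH hi)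
  rwa [Measure.map_apply ((hH.meas 0).prodMk (hH.meas i)) (hA.prod hB),
    Measure.map_apply ((hH.meas 0).prodMk (hH.meas 1)) (hA.prod hB)] at h

theorem ci_main (hH : HypH P X ν R a) (m : ℕ) {A B : Set 𝕏}
    (hA : MeasurableSet A) (hB : MeasurableSet B) :
    P {ω | X 0 ω ∈ A ∧ X (m + 1) ω ∈ B} =
      ∫⁻ x in A, (ENNReal.ofReal (1 - a (m + 1)) * ν B
        + (ENNReal.ofReal (a (m + 1)) / ((m + 1 : ℕ) : ℝ≥0∞)) *
          (R x B + (m : ℝ≥0∞) * (ENNReal.ofReal (1 - a 1) * ν B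
            + ENNReal.ofReal (a 1) * ∫⁻ y, R y B ∂(R x)))) ∂ν := by
  haveI := hH.probP; haveI := hH.probν; haveI := hH.markov
  have hRB : Measurable fun x => R x B := Kernel.measurable_coe R hB
  have hq : Measurable fun x => ∫⁻ y, R y B ∂(R x) := hRB.lintegral_kernel
  set n := m + 1 with hn
  have htuple : Measurable (fun ω (i : Fin n) => X i ω) :=
    measurable_pi_lambda (fun ω (i : Fin n) => X i ω) fun i => hH.meas i
  have hAcyl : MeasurableSet ((fun x : Fin n → 𝕏 => x 0) ⁻¹' A) :=
    (measurable_pi_apply 0) hA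
  have h := hH.pred n (by omega) B hB _ hAcyl
  have hset : {ω | (fun i : Fin n => X i ω) ∈ (fun x : Fin n → 𝕏 => x 0) ⁻¹' A ∧ X n ω ∈ B}
      = {ω | X 0 ω ∈ A ∧ X n ω ∈ B} := rfl
  rw [hset] at h
  rw [h]
  -- split the set integral over the tuple law
  have hSmeas : Measurable fun x : Fin n → 𝕏 => ∑ i : Fin n, R (x i) B :=
    Finset.measurable_sum _ fun i _ => hRB.comp (measurable_pi_apply i)
  rw [lintegral_add_left measurable_const, setLIntegral_const,
    lintegral_const_mul _ hSmeas]
  have hπA : (P.map fun ω (i : Fin n) => X i ω) ((fun x : Fin n → 𝕏 => x 0) ⁻¹' A) = ν A := by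
    rw [Measure.map_apply htuple hAcyl, ← hH.marginal 0,
      Measure.map_apply (hH.meas 0) hA]
    rfl
  -- each summand as an integral over Ω with indicator
  have hterm : ∀ i : Fin n,
      ∫⁻ x in (fun x : Fin n → 𝕏 => x 0) ⁻¹' A, R (x i) B ∂(P.map fun ω (i : Fin n) => X i ω)
        = ∫⁻ ω, A.indicator (fun _ => (1 : ℝ≥0∞)) (X 0 ω) * R (X i ω) B ∂P := by
    intro i
    have hints : Measurable fun x : Fin n → 𝕏 =>
        A.indicator (fun _ => (1 : ℝ≥0∞)) (x 0) * R (x i) B :=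
      ((measurable_const.indicator hA).comp (measurable_pi_apply 0)).mul
        (hRB.comp (measurable_pi_apply i))
    rw [← lintegral_indicator hAcyl]
    have hfun : (Set.indicator ((fun x : Fin n → 𝕏 => x 0) ⁻¹' A) (fun x => R (x i) B))
        = fun x : Fin n → 𝕏 => A.indicator (fun _ => (1 : ℝ≥0∞)) (x 0) * R (x i) B := by
      funext x
      by_cases hx : x 0 ∈ A <;>
        simp [Set.indicator_of_mem, Set.indicator_of_notMem, hx]
    rw [hfun, lintegral_map hints htuple]
    rfl
  -- compute the sum
  have h0 : ∫⁻ ω, A.indicator (fun _ => (1 : ℝ≥0∞)) (X 0 ω) * R (X 0 ω) B ∂P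
      = ∫⁻ x in A, R x B ∂ν := by
    have hg : Measurable (A.indicator fun y => R y B) := hRB.indicator hA
    rw [← lintegral_indicator hA, ← hH.marginal 0, lintegral_map hg (hH.meas 0)]
    exact lintegral_congr fun ω => by by_cases hy : X 0 ω ∈ A <;> simp [hy]
  have hsum : ∑ i : Fin n,
      ∫⁻ ω, A.indicator (fun _ => (1 : ℝ≥0∞)) (X 0 ω) * R (X i ω) B ∂P
        = ∫⁻ x in A, R x B ∂ν + (m : ℝ≥0∞) * ∫⁻ x in A, (ENNReal.ofReal (1 - a 1) * ν B
            + ENNReal.ofReal (a 1) * ∫⁻ y, R y B ∂(R x)) ∂ν := by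
    rw [Fin.sum_univ_succ]
    simp only [Fin.val_zero, Fin.val_succ]
    rw [h0]
    congr 1
    have : ∀ j : Fin m, ∫⁻ ω, A.indicator (fun _ => (1 : ℝ≥0∞)) (X 0 ω) * R (X (j + 1) ω) B ∂P
        = ∫⁻ x in A, (ENNReal.ofReal (1 - a 1) * ν B
            + ENNReal.ofReal (a 1) * ∫⁻ y, R y B ∂(R x)) ∂ν := fun j =>
      ci_mixed hH (by omega) hA hB
    rw [Finset.sum_congr rfl fun j _ => this j, Finset.sum_const, Finset.card_univ,
      Fintype.card_fin, nsmul_eq_mul]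
  -- assemble
  rw [lintegral_finset_sum _ (fun i (_ : i ∈ Finset.univ) =>
      (show Measurable fun x : Fin n → 𝕏 => R (x i) B from hRB.comp (measurable_pi_apply i))),
    Finset.sum_congr rfl fun i _ => hterm i, hsum, hπA]
  -- now compute the RHS target integral
  have hG : Measurable fun x => ENNReal.ofReal (1 - a 1) * ν B
      + ENNReal.ofReal (a 1) * ∫⁻ y, R y B ∂(R x) :=
    measurable_const.add (hq.const_mul _)
  have hbig : Measurable fun x => R x B + (m : ℝ≥0∞) * (ENNReal.ofReal (1 - a 1) * ν B
      + ENNReal.ofReal (a 1) * ∫⁻ y, R y B ∂(R x)) :=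
    hRB.add (hG.const_mul _)
  conv_rhs => rw [lintegral_add_left measurable_const, setLIntegral_const,
    lintegral_const_mul _ hbig, lintegral_add_left hRB, lintegral_const_mul _ hG]

theorem ci_aeE (hH : HypH P X ν R a) {B : Set 𝕏} (hB : MeasurableSet B) (m : ℕ) :
    ∀ᵐ x ∂ν, ENNReal.ofReal (1 - a (m + 1)) * ν B
        + (ENNReal.ofReal (a (m + 1)) / ((m + 1 : ℕ) : ℝ≥0∞)) *
          (R x B + (m : ℝ≥0∞) * (ENNReal.ofReal (1 - a 1) * ν B
            + ENNReal.ofReal (a 1) * ∫⁻ y, R y B ∂(R x)))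
      = ENNReal.ofReal (1 - a 1) * ν B + ENNReal.ofReal (a 1) * R x B := by
  haveI := hH.probP; haveI := hH.probν; haveI := hH.markov
  have hRB : Measurable fun x => R x B := Kernel.measurable_coe R hB
  have hq : Measurable fun x => ∫⁻ y, R y B ∂(R x) := hRB.lintegral_kernel
  have hf : Measurable fun x => ENNReal.ofReal (1 - a (m + 1)) * ν B
      + (ENNReal.ofReal (a (m + 1)) / ((m + 1 : ℕ) : ℝ≥0∞)) *
        (R x B + (m : ℝ≥0∞) * (ENNReal.ofReal (1 - a 1) * ν B
          + ENNReal.ofReal (a 1) * ∫⁻ y, R y B ∂(R x))) :=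
    measurable_const.add
      ((hRB.add ((measurable_const.add (hq.const_mul _)).const_mul _)).const_mul _)
  have hg : Measurable fun x => ENNReal.ofReal (1 - a 1) * ν B + ENNReal.ofReal (a 1) * R x B :=
    measurable_const.add (hRB.const_mul _)
  refine ae_eq_of_forall_setLIntegral_eq_of_sigmaFinite hf hg fun s hs _ => ?_
  rw [← ci_main hH m hs hB, ← ci_predB hH hs hB]
  exact ci_event hH (by omega) hs hB

theorem ci_real (hH : HypH P X ν R a) {B : Set 𝕏} (hB : MeasurableSet B) (m : ℕ) :
    ∀ᵐ x ∂ν,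
      ((m + 1 : ℕ) : ℝ) * ((1 - a (m + 1)) * (ν B).toReal)
        + a (m + 1) * ((R x B).toReal + (m : ℝ) * ((1 - a 1) * (ν B).toReal
            + a 1 * (∫⁻ y, R y B ∂(R x)).toReal))
      = ((m + 1 : ℕ) : ℝ) * ((1 - a 1) * (ν B).toReal + a 1 * (R x B).toReal) := by
  haveI := hH.probν; haveI := hH.markov
  have ha1 := hH.a_mem 1 le_rfl
  have ham := hH.a_mem (m + 1) (by omega)
  filter_upwards [ci_aeE hH hB m] with x hx
  have hm0 : ((m + 1 : ℕ) : ℝ≥0∞) ≠ 0 := by simp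
  have hmt : ((m + 1 : ℕ) : ℝ≥0∞) ≠ ⊤ := natCast_ne_top _
  have hx' : ((m + 1 : ℕ) : ℝ≥0∞) * (ENNReal.ofReal (1 - a (m + 1)) * ν B)
      + ENNReal.ofReal (a (m + 1)) * (R x B + (m : ℝ≥0∞) *
        (ENNReal.ofReal (1 - a 1) * ν B + ENNReal.ofReal (a 1) * ∫⁻ y, R y B ∂(R x)))
      = ((m + 1 : ℕ) : ℝ≥0∞) * (ENNReal.ofReal (1 - a 1) * ν B
          + ENNReal.ofReal (a 1) * R x B) := by
    have hcan : ((m + 1 : ℕ) : ℝ≥0∞) * (ENNReal.ofReal (a (m + 1)) / ((m + 1 : ℕ) : ℝ≥0∞) *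
        (R x B + (m : ℝ≥0∞) * (ENNReal.ofReal (1 - a 1) * ν B
          + ENNReal.ofReal (a 1) * ∫⁻ y, R y B ∂(R x))))
        = ENNReal.ofReal (a (m + 1)) * (R x B + (m : ℝ≥0∞) *
          (ENNReal.ofReal (1 - a 1) * ν B + ENNReal.ofReal (a 1) * ∫⁻ y, R y B ∂(R x))) := by
      rw [← mul_assoc, ENNReal.mul_div_cancel hm0 hmt]
    conv_rhs => rw [← hx, mul_add, hcan]
  have fν : ν B ≠ ⊤ := measure_ne_top ν B
  have fR : R x B ≠ ⊤ := measure_ne_top (R x) B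
  have fq : (∫⁻ y, R y B ∂(R x)) ≠ ⊤ := by
    refine ne_top_of_le_ne_top one_ne_top ?_
    calc ∫⁻ y, R y B ∂(R x) ≤ ∫⁻ _, 1 ∂(R x) := lintegral_mono fun y => prob_le_one
    _ = 1 := by simp
  have f1 : ((m + 1 : ℕ) : ℝ≥0∞) * (ENNReal.ofReal (1 - a (m + 1)) * ν B) ≠ ⊤ :=
    ENNReal.mul_ne_top hmt (ENNReal.mul_ne_top ENNReal.ofReal_ne_top fν)
  have f4 : ENNReal.ofReal (1 - a 1) * ν B ≠ ⊤ :=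
    ENNReal.mul_ne_top ENNReal.ofReal_ne_top fν
  have f5 : ENNReal.ofReal (a 1) * (∫⁻ y, R y B ∂(R x)) ≠ ⊤ :=
    ENNReal.mul_ne_top ENNReal.ofReal_ne_top fq
  have f6 : ENNReal.ofReal (a 1) * R x B ≠ ⊤ :=
    ENNReal.mul_ne_top ENNReal.ofReal_ne_top fR
  have f45 : (m : ℝ≥0∞) * (ENNReal.ofReal (1 - a 1) * ν B
      + ENNReal.ofReal (a 1) * ∫⁻ y, R y B ∂(R x)) ≠ ⊤ :=
    ENNReal.mul_ne_top (natCast_ne_top m) (ENNReal.add_ne_top.mpr ⟨f4, f5⟩)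
  have f2 : ENNReal.ofReal (a (m + 1)) * (R x B + (m : ℝ≥0∞) *
      (ENNReal.ofReal (1 - a 1) * ν B + ENNReal.ofReal (a 1) * ∫⁻ y, R y B ∂(R x))) ≠ ⊤ :=
    ENNReal.mul_ne_top ENNReal.ofReal_ne_top (ENNReal.add_ne_top.mpr ⟨fR, f45⟩)
  have f3 : ((m + 1 : ℕ) : ℝ≥0∞) * (ENNReal.ofReal (1 - a 1) * ν B
      + ENNReal.ofReal (a 1) * R x B) ≠ ⊤ :=
    ENNReal.mul_ne_top hmt (ENNReal.add_ne_top.mpr ⟨f4, f6⟩)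
  have h' := congrArg ENNReal.toReal hx'
  rw [ENNReal.toReal_add f1 f2] at h'
  simp only [ENNReal.toReal_mul, ENNReal.toReal_add fR f45, ENNReal.toReal_add f4 f5,
    ENNReal.toReal_add f4 f6, ENNReal.toReal_ofReal (by linarith [ham.2] : (0:ℝ) ≤ 1 - a (m+1)),
    ENNReal.toReal_ofReal (le_of_lt ham.1), ENNReal.toReal_ofReal (by linarith [ha1.2] : (0:ℝ) ≤ 1 - a 1),
    ENNReal.toReal_ofReal (le_of_lt ha1.1), ENNReal.toReal_natCast] at h'
  exact h'

theorem ci_countable {α : Type*} {S : Set (Set α)} (hS : S.Countable) :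
    (generatePiSystem S).Countable := by
  have hsub : generatePiSystem S ⊆ Set.sInter '' {T : Set (Set α) | T.Finite ∧ T ⊆ S} := by
    intro t ht
    induction ht with
    | base h =>
      exact ⟨{_}, ⟨Set.finite_singleton _, Set.singleton_subset_iff.mpr h⟩,
        Set.sInter_singleton _⟩
    | inter hs ht hne ihs iht =>
      obtain ⟨T1, ⟨hf1, hsub1⟩, he1⟩ := ihs
      obtain ⟨T2, ⟨hf2, hsub2⟩, he2⟩ := iht
      exact ⟨T1 ∪ T2, ⟨hf1.union hf2, Set.union_subset hsub1 hsub2⟩, by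
        rw [Set.sInter_union, he1, he2]⟩
  exact (((Set.countable_setOf_finite_subset hS).image _).mono hsub)

end Aux

theorem coefficient_identity {Ω 𝕏 : Type*} [MeasurableSpace Ω] [MeasurableSpace 𝕏]
    [StandardBorelSpace 𝕏]
    (P : Measure Ω) (X : ℕ → Ω → 𝕏) (ν : Measure 𝕏) (R : Kernel 𝕏 𝕏) (a : ℕ → ℝ)
    (hH : HypH P X ν R a) :
    ∀ n : ℕ, 2 ≤ n → ∀ᵐ x ∂ν, ∀ B : Set 𝕏, MeasurableSet B →
      ((n : ℝ) * a (n + 1) - (n + 1 : ℝ) * a n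
          + (1 - (a 2 - 2 * a 1 + a 1 * a 2) / (a 1 * a 2)) * a n * a (n + 1)) * (ν B).toReal =
        ((n : ℝ) * a (n + 1) - (n + 1 : ℝ) * a n
          + (1 - (a 2 - 2 * a 1 + a 1 * a 2) / (a 1 * a 2)) * a n * a (n + 1)) * (R x B).toReal := by
  haveI := hH.probν; haveI := hH.markov
  intro n hn
  set C : ℝ := (n : ℝ) * a (n + 1) - (n + 1 : ℝ) * a n
      + (1 - (a 2 - 2 * a 1 + a 1 * a 2) / (a 1 * a 2)) * a n * a (n + 1) with hCdef
  rcases eq_or_ne C 0 with hc | hc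
  · filter_upwards with x B hB
    rw [hc, zero_mul, zero_mul]
  · obtain ⟨k, rfl⟩ : ∃ k, n = k + 1 + 1 := ⟨n - 2, by omega⟩
    have ha1 := hH.a_mem 1 le_rfl
    have ha2 := hH.a_mem 2 (by omega)
    have haN := hH.a_mem (k + 1 + 1) (by omega)
    have haM := hH.a_mem (k + 1 + 1 + 1) (by omega)
    have ha10 : a 1 ≠ 0 := ne_of_gt ha1.1
    have ha20 : a 2 ≠ 0 := ne_of_gt ha2.1
    set D : ℝ := a 1 * a 2 * (((k : ℝ) + 2) * a (k + 1 + 1 + 1) - ((k : ℝ) + 3) * a (k + 1 + 1))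
        + a (k + 1 + 1) * a (k + 1 + 1 + 1) * (2 * a 1 - a 2) with hDdef
    have hCD : C * (a 1 * a 2) = D := by
      rw [hCdef, hDdef]
      push_cast
      field_simp
      ring
    have hD0 : D ≠ 0 := by
      rw [← hCD]
      exact mul_ne_zero hc (mul_ne_zero ha10 ha20)
    have key : ∀ B : Set 𝕏, MeasurableSet B → ∀ᵐ x ∂ν, R x B = ν B := by
      intro B hB
      filter_upwards [ci_real hH hB 1, ci_real hH hB (k + 1), ci_real hH hB (k + 1 + 1)]
        with x h2 hN hM
      set u := (ν B).toReal with hu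
      set v := (R x B).toReal with hv
      set w := (∫⁻ y, R y B ∂(R x)).toReal with hw
      push_cast at h2 hN hM
      norm_num at h2
      have hvu : (v - u) * D = 0 := by
        rw [hDdef]
        linear_combination (-(a 2 * a (k + 1 + 1 + 1))) * hN
          + (a 2 * a (k + 1 + 1)) * hM + (-(a (k + 1 + 1) * a (k + 1 + 1 + 1))) * h2
      have huv : v = u := by
        have := (mul_eq_zero.mp hvu).resolve_right hD0
        linarith [this]
      rw [← ENNReal.toReal_eq_toReal_iff' (measure_ne_top (R x) B) (measure_ne_top ν B)]
      exact huv
    -- upgrade to all measurable sets simultaneously via a countable generating π-system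
    set S := MeasurableSpace.countableGeneratingSet 𝕏 with hSdef
    have hSc : (generatePiSystem S).Countable :=
      ci_countable MeasurableSpace.countable_countableGeneratingSet
    have hmeasS : ∀ B ∈ generatePiSystem S, MeasurableSet B := by
      intro B hBm
      have h1 := generateFrom_measurableSet_of_generatePiSystem B hBm
      rwa [MeasurableSpace.generateFrom_countableGeneratingSet] at h1
    have hae : ∀ᵐ x ∂ν, ∀ B ∈ generatePiSystem S, R x B = ν B :=
      (ae_ball_iff hSc).mpr fun B hBm => key B (hmeasS B hBm)
    filter_upwards [hae] with x hx B hB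
    have hxm : R x = ν := by
      refine ext_of_generate_finite (generatePiSystem S)
        ((generateFrom_generatePiSystem_eq.trans
          MeasurableSpace.generateFrom_countableGeneratingSet).symm)
        (isPiSystem_generatePiSystem S) (fun s hs => hx s hs) ?_
      simp
    rw [hxm]
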